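/- Assume M_i = 0 for all i < −1, every M_i is a projective R-module, F_{j−1} ∘ F_j = 0 for all j ∈ ℤ, ker F_j = range F_{j+1} for all j ≥ 1, and the families K and L are null-homotopies for w₁ and w₂ respectively: K_j ∘ F_j + F_{j+1} ∘ K_{j+1} = w₁·id_{M_j} and L_j ∘ F_j + F_{j+1} ∘ L_{j+1} = w₂·id_{M_j} for all j ∈ ℤ. Then there exists a family of R-linear maps G_i : M_{i−1} → M_{i+2} (i ∈ ℤ) such that K_{i+1} ∘ L_i + L_{i+1} ∘ K_i + F_{i+2} ∘ G_i + G_{i−1} ∘ F_{i−1} = 0 for all i ∈ ℤ. -/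
import Mathlib
set_option linter.unusedSectionVars false
set_option maxHeartbeats 800000


/-- Transport of a linear map along equalities of the indices of a `ℤ`-indexed
family of modules. -/
def lcast {R : Type*} [CommRing R] {M : ℤ → Type*}
    [∀ i, AddCommGroup (M i)] [∀ i, Module R (M i)]
    {i i' j j' : ℤ} (hi : i = i') (hj : j = j')
    (f : M i →ₗ[R] M j) : M i' →ₗ[R] M j' := by
  subst hi; subst hj; exact f

section Aux

variable {R : Type*} [CommRing R] {M : ℤ → Type*}
  [∀ i, AddCommGroup (M i)] [∀ i, Module R (M i)]

def cst {i j : ℤ} (h : i = j) (x : M i) : M j := h ▸ x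

@[simp] lemma cst_rfl {i : ℤ} (h : i = i) (x : M i) : cst h x = x := rfl

@[simp] lemma cst_cst {i j k : ℤ} (h : i = j) (h' : j = k) (x : M i) :
    cst (M := M) h' (cst h x) = cst (h.trans h') x := by subst h; subst h'; rfl

@[simp] lemma cst_zero {i j : ℤ} (h : i = j) : cst (M := M) h 0 = 0 := by subst h; rfl

@[simp] lemma cst_add {i j : ℤ} (h : i = j) (x y : M i) :
    cst h (x + y) = cst h x + cst h y := by subst h; rfl

@[simp] lemma cst_neg {i j : ℤ} (h : i = j) (x : M i) :
    cst h (-x) = -cst h x := by subst h; rfl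

@[simp] lemma cst_sub {i j : ℤ} (h : i = j) (x y : M i) :
    cst h (x - y) = cst h x - cst h y := by subst h; rfl

@[simp] lemma cst_smul {i j : ℤ} (h : i = j) (r : R) (x : M i) :
    cst h (r • x) = r • cst h x := by subst h; rfl

@[simp] lemma cst_eq_zero {i j : ℤ} (h : i = j) (x : M i) :
    cst h x = 0 ↔ x = 0 := by subst h; simp

@[simp] lemma lcast_apply {i i' j j' : ℤ} (hi : i = i') (hj : j = j')
    (f : M i →ₗ[R] M j) (x : M i') :
    lcast hi hj f x = cst hj (f (cst hi.symm x)) := by subst hi; subst hj; rfl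

lemma F_cst (F : ∀ j : ℤ, M j →ₗ[R] M (j - 1)) {i j : ℤ} (h : i = j)
    (h' : i - 1 = j - 1) (x : M i) :
    F j (cst h x) = cst h' (F i x) := by subst h; rfl

lemma K_cst (K : ∀ j : ℤ, M (j - 1) →ₗ[R] M j) {i j : ℤ} (h : i = j)
    (h' : i - 1 = j - 1) (x : M (i - 1)) :
    K j (cst h' x) = cst h (K i x) := by subst h; rfl

variable {w₁ w₂ : R} (F : ∀ j : ℤ, M j →ₗ[R] M (j - 1))
  (K L : ∀ j : ℤ, M (j - 1) →ₗ[R] M j)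

/-- Pointwise form of `F∘K = w₁ - K∘F` at every index. -/
lemma FK (hK : ∀ j : ℤ,
      (K j).comp (F j)
        + lcast (show j + 1 - 1 = j by ring) (show j + 1 - 1 = j by ring)
            ((F (j + 1)).comp (K (j + 1)))
      = w₁ • (LinearMap.id : M j →ₗ[R] M j)) (j : ℤ) (z : M (j - 1)) :
    F j (K j z) = w₁ • z - K (j - 1) (F (j - 1) z) := by
  have A := DFunLike.congr_fun (hK (j - 1)) z
  simp only [LinearMap.add_apply, LinearMap.comp_apply, lcast_apply,
    LinearMap.smul_apply, LinearMap.id_apply] at A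
  rw [K_cst K (show j = j - 1 + 1 by ring) (show j - 1 = j - 1 + 1 - 1 by ring)] at A
  rw [F_cst F (show j = j - 1 + 1 by ring) (show j - 1 = j - 1 + 1 - 1 by ring)] at A
  simp only [cst_cst, cst_rfl] at A
  rw [eq_sub_iff_add_eq, add_comm]
  exact A

end Aux

section Main

variable {R : Type*} [CommRing R] {M : ℤ → Type*}
  [∀ i, AddCommGroup (M i)] [∀ i, Module R (M i)]
  {w₁ w₂ : R} (F : ∀ j : ℤ, M j →ₗ[R] M (j - 1))
  (K L : ∀ j : ℤ, M (j - 1) →ₗ[R] M j)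

def Smap (i : ℤ) : M (i - 1) →ₗ[R] M (i + 1) :=
  (K (i + 1)).comp (lcast rfl (show i = i + 1 - 1 by ring) (L i))
  + (L (i + 1)).comp (lcast rfl (show i = i + 1 - 1 by ring) (K i))

@[simp] lemma Smap_apply (i : ℤ) (x : M (i - 1)) :
    Smap K L i x
      = K (i + 1) (cst (show i = i + 1 - 1 by ring) (L i x))
        + L (i + 1) (cst (show i = i + 1 - 1 by ring) (K i x)) := by
  simp [Smap]

lemma Smap_F
    (hK : ∀ j : ℤ,
      (K j).comp (F j)
        + lcast (show j + 1 - 1 = j by ring) (show j + 1 - 1 = j by ring)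
            ((F (j + 1)).comp (K (j + 1)))
      = w₁ • (LinearMap.id : M j →ₗ[R] M j))
    (hL : ∀ j : ℤ,
      (L j).comp (F j)
        + lcast (show j + 1 - 1 = j by ring) (show j + 1 - 1 = j by ring)
            ((F (j + 1)).comp (L (j + 1)))
      = w₂ • (LinearMap.id : M j →ₗ[R] M j))
    (i : ℤ) (x : M (i - 1)) :
    cst (show i + 1 - 1 = i by ring) (F (i + 1) (Smap K L i x))
      = cst (show i - 1 + 1 = i by ring) (Smap K L (i - 1) (F (i - 1) x)) := by
  have e1 : (i : ℤ) = i + 1 - 1 := by ring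
  have e2 : (i : ℤ) - 1 = i + 1 - 1 - 1 := by ring
  have q : (i : ℤ) = i - 1 + 1 := by ring
  have e4 : (i : ℤ) - 1 = i - 1 + 1 - 1 := by ring
  simp only [Smap_apply, map_add, cst_add, FK F K hK, FK F L hL,
    F_cst F e1 e2, K_cst K e1 e2, K_cst L e1 e2, K_cst K q e4, K_cst L q e4,
    map_sub, map_smul, cst_cst, cst_rfl, cst_sub, cst_smul]
  abel


def Eqn (i : ℤ) (g : M (i - 1) →ₗ[R] M (i + 2))
    (g' : M (i - 1 - 1) →ₗ[R] M (i - 1 + 2)) : Prop :=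
  ∀ x : M (i - 1),
    Smap K L i x + cst (show i + 2 - 1 = i + 1 by ring) (F (i + 2) (g x))
      + cst (show i - 1 + 2 = i + 1 by ring) (g' (F (i - 1) x)) = 0

lemma step
    (hproj : ∀ i : ℤ, Module.Projective R (M i))
    (hcomplex : ∀ j : ℤ, (F (j - 1)).comp (F j) = 0)
    (hexact : ∀ j : ℤ, 1 ≤ j →
      LinearMap.ker (F j)
        = LinearMap.range (lcast rfl (show j + 1 - 1 = j by ring) (F (j + 1))))
    (hK : ∀ j : ℤ,
      (K j).comp (F j)
        + lcast (show j + 1 - 1 = j by ring) (show j + 1 - 1 = j by ring)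
            ((F (j + 1)).comp (K (j + 1)))
      = w₁ • (LinearMap.id : M j →ₗ[R] M j))
    (hL : ∀ j : ℤ,
      (L j).comp (F j)
        + lcast (show j + 1 - 1 = j by ring) (show j + 1 - 1 = j by ring)
            ((F (j + 1)).comp (L (j + 1)))
      = w₂ • (LinearMap.id : M j →ₗ[R] M j))
    (i : ℤ) (hi : 0 ≤ i)
    (g' : M (i - 1 - 1) →ₗ[R] M (i - 1 + 2))
    (g'' : M (i - 1 - 1 - 1) →ₗ[R] M (i - 1 - 1 + 2))
    (hE : Eqn F K L (i - 1) g' g'') :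
    ∃ g, Eqn F K L i g g' := by
  classical
  set φ : M (i + 2) →ₗ[R] M (i + 1) :=
    lcast rfl (show i + 2 - 1 = i + 1 by ring) (F (i + 2)) with hφ
  set T : M (i - 1) →ₗ[R] M (i + 1) :=
    -(Smap K L i + lcast rfl (show i - 1 + 2 = i + 1 by ring) (g'.comp (F (i - 1)))) with hT
  have key : ∀ x, F (i + 1) (T x) = 0 := by
    intro x
    have hy0 : F (i - 1 - 1) (F (i - 1) x) = 0 := by
      simpa using DFunLike.congr_fun (hcomplex (i - 1)) x
    have hE' := hE (F (i - 1) x)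
    rw [hy0] at hE'
    simp only [map_zero, cst_zero, add_zero] at hE'
    have hS := Smap_F F K L hK hL i x
    rw [← cst_eq_zero (show i + 1 - 1 = i by ring)]
    simp only [hT, LinearMap.neg_apply, LinearMap.add_apply, lcast_apply, cst_rfl,
      LinearMap.comp_apply, map_neg, map_add, cst_neg, cst_add]
    rw [hS, F_cst F (show i - 1 + 2 = i + 1 by ring)
      (show i - 1 + 2 - 1 = i + 1 - 1 by ring)]
    simp only [cst_cst]
    have h0 := congrArg (cst (M := M) (show i - 1 + 1 = i by ring)) hE'
    simp only [cst_add, cst_cst, cst_zero] at h0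
    rw [neg_eq_zero]
    exact h0
  have hmem : ∀ x, T x ∈ LinearMap.range φ := by
    intro x
    have hk : T x ∈ LinearMap.ker (F (i + 1)) := LinearMap.mem_ker.mpr (key x)
    rw [hexact (i + 1) (by omega)] at hk
    obtain ⟨y, hy⟩ := hk
    refine ⟨cst (show i + 1 + 1 = i + 2 by ring) y, ?_⟩
    simp only [hφ, lcast_apply, cst_rfl] at hy ⊢
    rw [F_cst F (show i + 1 + 1 = i + 2 by ring) (show i + 1 + 1 - 1 = i + 2 - 1 by ring)]
    simp only [cst_cst]
    exact hy
  haveI := hproj (i - 1)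
  obtain ⟨g, hg⟩ := Module.projective_lifting_property φ.rangeRestrict
      (LinearMap.codRestrict (LinearMap.range φ) T hmem)
      (LinearMap.surjective_rangeRestrict φ)
  refine ⟨g, ?_⟩
  intro x
  have hx : φ (g x) = T x := congrArg Subtype.val (DFunLike.congr_fun hg x)
  simp only [hT, lcast_apply, cst_rfl, LinearMap.comp_apply, LinearMap.neg_apply,
    LinearMap.add_apply] at hx
  rw [show cst (show i + 2 - 1 = i + 1 by ring) (F (i + 2) (g x)) = φ (g x) from by
        simp [hφ], hx]
  abel

end Main

section Seq

variable {α : ℤ → Type*}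

def tcast {i j : ℤ} (h : i = j) (x : α i) : α j := h ▸ x

lemma tcast_tcast {i j k : ℤ} (h : i = j) (h' : j = k) (x : α i) :
    tcast (α := α) h' (tcast h x) = tcast (h.trans h') x := by subst h; subst h'; rfl

lemma tcast_z (z : ∀ i, α i) {i j : ℤ} (h : i = j) : tcast h (z i) = z j := by
  subst h; rfl

lemma E_cast (E : ∀ i : ℤ, α i → α (i - 1) → Prop) {i j : ℤ}
    (h : i = j) (h' : i - 1 = j - 1) (g : α i) (p : α (i - 1)) (hE : E i g p) :
    E j (tcast h g) (tcast h' p) := by subst h; exact hE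

lemma E_congr (E : ∀ i : ℤ, α i → α (i - 1) → Prop) {i : ℤ} {g g₁ : α i}
    {p p₁ : α (i - 1)} (hg : g = g₁) (hp : p = p₁) (hE : E i g p) : E i g₁ p₁ := by
  subst hg; subst hp; exact hE

noncomputable def chain (z : ∀ i, α i) (E : ∀ i : ℤ, α i → α (i - 1) → Prop)
    (hneg : ∀ i : ℤ, i < 0 → E i (z i) (z (i - 1)))
    (hstep : ∀ i : ℤ, 0 ≤ i → ∀ gp : α (i - 1),
      (∃ gpp, E (i - 1) gp gpp) → ∃ g, E i g gp) :
    ∀ n : ℕ, Σ' (p : α ((n : ℤ) - 1)) (g : α (n : ℤ)), E (n : ℤ) g p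
  | 0 =>
    have w := hstep ((0 : ℕ) : ℤ) (by omega) (z (((0 : ℕ) : ℤ) - 1))
      ⟨z _, hneg _ (by omega)⟩
    ⟨z _, w.choose, w.choose_spec⟩
  | (n + 1) =>
    have prev := chain z E hneg hstep n
    have e : (n : ℤ) = ((n + 1 : ℕ) : ℤ) - 1 := by push_cast; ring
    have e' : (n : ℤ) - 1 = ((n + 1 : ℕ) : ℤ) - 1 - 1 := by push_cast; ring
    have w := hstep ((n + 1 : ℕ) : ℤ) (by omega) (tcast e prev.2.1)
      ⟨tcast e' prev.1, E_cast E e e' _ _ prev.2.2⟩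
    ⟨tcast e prev.2.1, w.choose, w.choose_spec⟩

lemma chain_succ_fst (z : ∀ i, α i) (E : ∀ i : ℤ, α i → α (i - 1) → Prop)
    (hneg : ∀ i : ℤ, i < 0 → E i (z i) (z (i - 1)))
    (hstep : ∀ i : ℤ, 0 ≤ i → ∀ gp : α (i - 1),
      (∃ gpp, E (i - 1) gp gpp) → ∃ g, E i g gp) (n : ℕ) :
    (chain z E hneg hstep (n + 1)).1
      = tcast (by push_cast; ring) (chain z E hneg hstep n).2.1 := rfl

lemma chain_zero_fst (z : ∀ i, α i) (E : ∀ i : ℤ, α i → α (i - 1) → Prop)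
    (hneg : ∀ i : ℤ, i < 0 → E i (z i) (z (i - 1)))
    (hstep : ∀ i : ℤ, 0 ≤ i → ∀ gp : α (i - 1),
      (∃ gpp, E (i - 1) gp gpp) → ∃ g, E i g gp) :
    (chain z E hneg hstep 0).1 = z _ := rfl

lemma exists_seq (z : ∀ i, α i) (E : ∀ i : ℤ, α i → α (i - 1) → Prop)
    (hneg : ∀ i : ℤ, i < 0 → E i (z i) (z (i - 1)))
    (hstep : ∀ i : ℤ, 0 ≤ i → ∀ gp : α (i - 1),
      (∃ gpp, E (i - 1) gp gpp) → ∃ g, E i g gp) :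
    ∃ G : ∀ i, α i, ∀ i, E i (G i) (G (i - 1)) := by
  classical
  refine ⟨fun i => if h : 0 ≤ i then
      tcast (Int.toNat_of_nonneg h) (chain z E hneg hstep i.toNat).2.1 else z i, ?_⟩
  intro i
  beta_reduce
  by_cases h : 0 ≤ i
  · rw [dif_pos h]
    have hE := E_cast E (Int.toNat_of_nonneg h) (by omega) _ _
      (chain z E hneg hstep i.toNat).2.2
    by_cases h1 : 1 ≤ i
    · rw [dif_pos (by omega : (0 : ℤ) ≤ i - 1)]
      refine E_congr E rfl ?_ hE
      have key : ∀ (n m : ℕ), n = m + 1 →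
          ∀ (hA : ((n : ℤ)) - 1 = i - 1) (hB : ((m : ℤ)) = i - 1),
          tcast hA (chain z E hneg hstep n).1
            = tcast hB (chain z E hneg hstep m).2.1 := by
        rintro n m rfl hA hB
        rw [chain_succ_fst, tcast_tcast]
      exact key _ _ (by omega) _ _
    · have hi0 : i = 0 := by omega
      subst hi0
      rw [dif_neg (by norm_num : ¬ (0 : ℤ) ≤ 0 - 1)]
      refine E_congr E rfl ?_ hE
      have key0 : ∀ (n : ℕ), n = 0 → ∀ (hA : ((n : ℤ)) - 1 = 0 - 1),
          tcast hA (chain z E hneg hstep n).1 = z (0 - 1) := by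
        rintro n rfl hA
        rw [chain_zero_fst]
        exact tcast_z z hA
      exact key0 _ (by omega) _
  · rw [dif_neg h, dif_neg (by omega : ¬ (0 : ℤ) ≤ i - 1)]
    exact hneg i (by omega)

end Seq


section Assemble

variable {R : Type*} [CommRing R] {M : ℤ → Type*}
  [∀ i, AddCommGroup (M i)] [∀ i, Module R (M i)]
  {w₁ w₂ : R} (F : ∀ j : ℤ, M j →ₗ[R] M (j - 1))
  (K L : ∀ j : ℤ, M (j - 1) →ₗ[R] M j)

lemma Eqn_neg (hzero : ∀ i : ℤ, i < -1 → Subsingleton (M i)) (i : ℤ) (hi : i < 0) :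
    Eqn F K L i 0 0 := by
  intro x
  haveI := hzero (i - 1) (by omega)
  rw [Subsingleton.elim x 0]
  simp

end Assemble

/-- existence of the homotopies `G_i` linking the two null-homotopies. -/
theorem statement6 {R : Type*} [CommRing R] (w₁ w₂ : R) {M : ℤ → Type*}
    [∀ i, AddCommGroup (M i)] [∀ i, Module R (M i)]
    (F : ∀ j : ℤ, M j →ₗ[R] M (j - 1))
    (K L : ∀ j : ℤ, M (j - 1) →ₗ[R] M j)
    (hzero : ∀ i : ℤ, i < -1 → Subsingleton (M i))
    (hproj : ∀ i : ℤ, Module.Projective R (M i))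
    (hcomplex : ∀ j : ℤ, (F (j - 1)).comp (F j) = 0)
    (hexact : ∀ j : ℤ, 1 ≤ j →
      LinearMap.ker (F j)
        = LinearMap.range (lcast rfl (show j + 1 - 1 = j by ring) (F (j + 1))))
    (hK : ∀ j : ℤ,
      (K j).comp (F j)
        + lcast (show j + 1 - 1 = j by ring) (show j + 1 - 1 = j by ring)
            ((F (j + 1)).comp (K (j + 1)))
      = w₁ • (LinearMap.id : M j →ₗ[R] M j))
    (hL : ∀ j : ℤ,
      (L j).comp (F j)
        + lcast (show j + 1 - 1 = j by ring) (show j + 1 - 1 = j by ring)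
            ((F (j + 1)).comp (L (j + 1)))
      = w₂ • (LinearMap.id : M j →ₗ[R] M j)) :
    ∃ G : ∀ i : ℤ, M (i - 1) →ₗ[R] M (i + 2),
      ∀ i : ℤ,
        (K (i + 1)).comp (lcast rfl (show i = i + 1 - 1 by ring) (L i))
          + (L (i + 1)).comp (lcast rfl (show i = i + 1 - 1 by ring) (K i))
          + lcast rfl (show i + 2 - 1 = i + 1 by ring) ((F (i + 2)).comp (G i))
          + lcast rfl (show i - 1 + 2 = i + 1 by ring) ((G (i - 1)).comp (F (i - 1)))
        = 0 := by
  obtain ⟨G, hG⟩ := exists_seq (α := fun i => M (i - 1) →ₗ[R] M (i + 2))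
      (fun _ => 0) (Eqn F K L)
      (fun i hi => Eqn_neg F K L hzero i hi)
      (fun i hi gp h => h.elim
        (fun gpp hE => step F K L hproj hcomplex hexact hK hL i hi gp gpp hE))
  refine ⟨G, fun i => ?_⟩
  ext x
  have hx := hG i x
  simp only [Smap_apply] at hx
  simp only [LinearMap.add_apply, LinearMap.comp_apply, lcast_apply, cst_rfl,
    LinearMap.zero_apply]
  exact hx
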